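/- arXiv:1709.03266 — 2 statements merged into one kernel-verified Lean document; each statement's English description precedes it below -/
import Mathlib

section
/- Let u₁, v₁, w₁ : [0,∞) → ℝ be continuous nonnegative functions and let c₁ > 0. If u₁(t) ≤ c₁ + ∫₀ᵗ (u₁(s)v₁(s) + w₁(s)) ds for all t ≥ 0, then for every ρ > 0 and all t ≥ 0, u₁(t) ≤ exp(∫₀ᵗ v₁(s) ds) · [c₁ + ρ(exp(∫₀ᵗ w₁(s)/ρ ds) − 1)]. -/
open Set MeasureTheory intervalIntegral

/-- Gronwall-type inequality (Lemma 2.1). -/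
theorem gronwall_type_inequality
    (u₁ v₁ w₁ : ℝ → ℝ) (c₁ : ℝ) (hc₁ : 0 < c₁)
    (hu_cont : ContinuousOn u₁ (Set.Ici 0))
    (hv_cont : ContinuousOn v₁ (Set.Ici 0))
    (hw_cont : ContinuousOn w₁ (Set.Ici 0))
    (hu_nonneg : ∀ t ≥ (0:ℝ), 0 ≤ u₁ t)
    (hv_nonneg : ∀ t ≥ (0:ℝ), 0 ≤ v₁ t)
    (hw_nonneg : ∀ t ≥ (0:ℝ), 0 ≤ w₁ t)
    (hineq : ∀ t ≥ (0:ℝ), u₁ t ≤ c₁ + ∫ s in (0:ℝ)..t, (u₁ s * v₁ s + w₁ s)) :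
    ∀ ρ > (0:ℝ), ∀ t ≥ (0:ℝ),
      u₁ t ≤ Real.exp (∫ s in (0:ℝ)..t, v₁ s) *
        (c₁ + ρ * (Real.exp (∫ s in (0:ℝ)..t, w₁ s / ρ) - 1)) := by
  intro ρ hρ T hT
  -- integrability facts
  have hIcc : ∀ t : ℝ, 0 ≤ t → Set.uIcc (0:ℝ) t ⊆ Set.Ici 0 := by
    intro t ht
    rw [Set.uIcc_of_le ht]
    exact fun x hx => hx.1
  have huv_cont : ContinuousOn (fun s => u₁ s * v₁ s) (Set.Ici 0) := hu_cont.mul hv_cont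
  have huv_int : ∀ t : ℝ, 0 ≤ t → IntervalIntegrable (fun s => u₁ s * v₁ s) volume 0 t :=
    fun t ht => (huv_cont.mono (hIcc t ht)).intervalIntegrable
  have hw_int : ∀ t : ℝ, 0 ≤ t → IntervalIntegrable w₁ volume 0 t :=
    fun t ht => (hw_cont.mono (hIcc t ht)).intervalIntegrable
  have hv_int : ∀ t : ℝ, 0 ≤ t → IntervalIntegrable v₁ volume 0 t :=
    fun t ht => (hv_cont.mono (hIcc t ht)).intervalIntegrable
  set C : ℝ := c₁ + ρ * (Real.exp ((∫ s in (0:ℝ)..T, w₁ s) / ρ) - 1) with hC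
  have hWT : (0:ℝ) ≤ ∫ s in (0:ℝ)..T, w₁ s :=
    intervalIntegral.integral_nonneg hT (fun x hx => hw_nonneg x hx.1)
  -- `∫₀ᵀ w ≤ ρ (exp(W T/ρ) - 1)`
  have hWle : (∫ s in (0:ℝ)..T, w₁ s) ≤ ρ * (Real.exp ((∫ s in (0:ℝ)..T, w₁ s) / ρ) - 1) := by
    have h1 : (∫ s in (0:ℝ)..T, w₁ s) / ρ + 1 ≤ Real.exp ((∫ s in (0:ℝ)..T, w₁ s) / ρ) :=
      Real.add_one_le_exp _
    have : (∫ s in (0:ℝ)..T, w₁ s) / ρ ≤ Real.exp ((∫ s in (0:ℝ)..T, w₁ s) / ρ) - 1 := by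
      linarith
    calc (∫ s in (0:ℝ)..T, w₁ s) = ρ * ((∫ s in (0:ℝ)..T, w₁ s) / ρ) := by
          field_simp
      _ ≤ ρ * (Real.exp ((∫ s in (0:ℝ)..T, w₁ s) / ρ) - 1) := by
          exact mul_le_mul_of_nonneg_left this hρ.le
  -- Step 1: `u t ≤ C + ∫₀ᵗ u v` on `[0, T]`
  have step1 : ∀ t ∈ Set.Icc (0:ℝ) T, u₁ t ≤ C + ∫ s in (0:ℝ)..t, u₁ s * v₁ s := by
    intro t ht
    have ht0 : (0:ℝ) ≤ t := ht.1
    have hsplit : (∫ s in (0:ℝ)..t, (u₁ s * v₁ s + w₁ s))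
        = (∫ s in (0:ℝ)..t, u₁ s * v₁ s) + ∫ s in (0:ℝ)..t, w₁ s :=
      intervalIntegral.integral_add (huv_int t ht0) (hw_int t ht0)
    have hmono : (∫ s in (0:ℝ)..t, w₁ s) ≤ ∫ s in (0:ℝ)..T, w₁ s := by
      have : (∫ s in (0:ℝ)..T, w₁ s) = (∫ s in (0:ℝ)..t, w₁ s) + ∫ s in t..T, w₁ s :=
        (intervalIntegral.integral_add_adjacent_intervals (hw_int t ht0)
          ((hw_cont.mono (by rw [Set.uIcc_of_le ht.2]; exact fun x hx => le_trans ht0 hx.1)).intervalIntegrable)).symm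
      have hnn : (0:ℝ) ≤ ∫ s in t..T, w₁ s :=
        intervalIntegral.integral_nonneg ht.2 (fun x hx => hw_nonneg x (le_trans ht0 hx.1))
      linarith
    have := hineq t ht0
    rw [hsplit] at this
    have : u₁ t ≤ c₁ + (∫ s in (0:ℝ)..t, u₁ s * v₁ s) + ∫ s in (0:ℝ)..T, w₁ s := by linarith
    rw [hC]; linarith
  -- Step 2: Gronwall.  Define `g t = (C + ∫₀ᵗ u v) * exp(-∫₀ᵗ v)` and show it is antitone.
  set φ : ℝ → ℝ := fun t => C + ∫ s in (0:ℝ)..t, u₁ s * v₁ s with hφ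
  set V : ℝ → ℝ := fun t => ∫ s in (0:ℝ)..t, v₁ s with hV
  set g : ℝ → ℝ := fun t => φ t * Real.exp (-V t) with hg
  have hg_cont : ContinuousOn g (Set.Icc 0 T) := by
    have h1 : ContinuousOn φ (Set.Icc 0 T) := by
      have := intervalIntegral.continuousOn_primitive_interval
        (f := fun s => u₁ s * v₁ s) (μ := volume) (a := 0) (b := T)
        ((huv_cont.mono (hIcc T hT)).integrableOn_compact (by rw [Set.uIcc_of_le hT]; exact isCompact_Icc))
      rw [Set.uIcc_of_le hT] at this
      exact continuousOn_const.add this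
    have h2 : ContinuousOn V (Set.Icc 0 T) := by
      have := intervalIntegral.continuousOn_primitive_interval
        (f := v₁) (μ := volume) (a := 0) (b := T)
        ((hv_cont.mono (hIcc T hT)).integrableOn_compact (by rw [Set.uIcc_of_le hT]; exact isCompact_Icc))
      rw [Set.uIcc_of_le hT] at this
      exact this
    exact h1.mul ((Real.continuous_exp.comp_continuousOn h2.neg))
  -- derivatives on the interior
  have hderiv : ∀ s ∈ Set.Ioo (0:ℝ) T,
      HasDerivAt g ((u₁ s * v₁ s - v₁ s * φ s) * Real.exp (-V s)) s := by
    intro s hs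
    have hs0 : (0:ℝ) < s := hs.1
    have hmem : s ∈ Set.Ioi (0:ℝ) := hs0
    have hmeas_uv : StronglyMeasurableAtFilter (fun s => u₁ s * v₁ s) (nhds s) volume :=
      ContinuousOn.stronglyMeasurableAtFilter isOpen_Ioi
        (huv_cont.mono (Set.Ioi_subset_Ici le_rfl)) s hmem
    have hmeas_v : StronglyMeasurableAtFilter v₁ (nhds s) volume :=
      ContinuousOn.stronglyMeasurableAtFilter isOpen_Ioi
        (hv_cont.mono (Set.Ioi_subset_Ici le_rfl)) s hmem
    have hcont_uv : ContinuousAt (fun s => u₁ s * v₁ s) s :=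
      huv_cont.continuousAt (Ici_mem_nhds hs0)
    have hcont_v : ContinuousAt v₁ s := hv_cont.continuousAt (Ici_mem_nhds hs0)
    have hdφ : HasDerivAt φ (u₁ s * v₁ s) s := by
      have := intervalIntegral.integral_hasDerivAt_right (huv_int s hs0.le) hmeas_uv hcont_uv
      simpa [hφ] using this
    have hdV : HasDerivAt V (v₁ s) s :=
      intervalIntegral.integral_hasDerivAt_right (hv_int s hs0.le) hmeas_v hcont_v
    have hdexp : HasDerivAt (fun t => Real.exp (-V t)) (Real.exp (-V s) * (-v₁ s)) s := by
      have := (Real.hasDerivAt_exp (-V s)).comp s hdV.neg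
      exact this
    have := hdφ.mul hdexp
    exact this.congr_deriv (by ring)
  have hg_anti : AntitoneOn g (Set.Icc 0 T) := by
    apply antitoneOn_of_deriv_nonpos (convex_Icc 0 T) hg_cont
    · intro s hs
      rw [interior_Icc] at hs
      exact ((hderiv s hs).differentiableAt).differentiableWithinAt
    · intro s hs
      rw [interior_Icc] at hs
      rw [(hderiv s hs).deriv]
      have hs0 : (0:ℝ) ≤ s := hs.1.le
      have h1 : u₁ s ≤ φ s := step1 s ⟨hs0, hs.2.le⟩
      have h2 : 0 ≤ v₁ s := hv_nonneg s hs0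
      have h3 : u₁ s * v₁ s - v₁ s * φ s ≤ 0 := by nlinarith
      exact mul_nonpos_of_nonpos_of_nonneg h3 (Real.exp_pos _).le
  have hgT : g T ≤ g 0 := hg_anti (Set.left_mem_Icc.2 hT) (Set.right_mem_Icc.2 hT) hT
  have hg0 : g 0 = C := by
    simp [hg, hφ, hV]
  have hφT : φ T ≤ C * Real.exp (V T) := by
    have hE : (0:ℝ) < Real.exp (-V T) := Real.exp_pos _
    rw [hg0] at hgT
    have : φ T * Real.exp (-V T) ≤ C := hgT
    calc φ T = φ T * Real.exp (-V T) * Real.exp (V T) := by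
          rw [mul_assoc, ← Real.exp_add]; simp
      _ ≤ C * Real.exp (V T) := by
          exact mul_le_mul_of_nonneg_right this (Real.exp_pos _).le
  have huT : u₁ T ≤ φ T := step1 T ⟨hT, le_rfl⟩
  have hWeq : (∫ s in (0:ℝ)..T, w₁ s / ρ) = (∫ s in (0:ℝ)..T, w₁ s) / ρ := by
    rw [intervalIntegral.integral_div]
  rw [hWeq]
  calc u₁ T ≤ φ T := huT
    _ ≤ C * Real.exp (V T) := hφT
    _ = Real.exp (∫ s in (0:ℝ)..T, v₁ s) *
        (c₁ + ρ * (Real.exp ((∫ s in (0:ℝ)..T, w₁ s) / ρ) - 1)) := by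
        rw [hC, hV]; ring
end

section
/- Let a : [0,∞) → ℝⁿ be continuous and satisfy, for constants k₁ ≥ 1, λ* ∈ ℝ, Γ₀ > 0, T, ω > 0, M_d ≥ 0, δ ∈ ℝ, the integral inequality |a(τ)|e^{λ*τ} ≤ k₁|a(0)| + ∫₀^τ (k₁Γ₀ e^{λ*s}|a(s)| + k₁Tω e^{(λ*−ω)s} M_d e^{δ s}) ds for all τ ≥ 0. Then, with λ** := λ* − k₁Γ₀, for all τ ≥ 0: |a(τ)| ≤ e^{−λ**τ}[k₁|a(0)| + ω(exp(k₁T M_d ∫₀^τ e^{(λ**+k₁Γ₀−ω+δ)s} ds) − 1)]. -/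
open intervalIntegral Set

theorem key_solution_estimate (n : ℕ)
    (a : ℝ → EuclideanSpace ℝ (Fin n)) (ha : Continuous a)
    (k₁ lamStar Γ₀ T ω Md δ : ℝ)
    (hk₁ : 1 ≤ k₁) (hΓ₀ : 0 < Γ₀) (hT : 0 < T) (hω : 0 < ω) (hMd : 0 ≤ Md)
    (hineq : ∀ τ ≥ (0:ℝ),
      ‖a τ‖ * Real.exp (lamStar * τ) ≤ k₁ * ‖a 0‖ +
        ∫ s in (0:ℝ)..τ,
          (k₁ * Γ₀ * Real.exp (lamStar * s) * ‖a s‖ +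
            k₁ * T * ω * Real.exp ((lamStar - ω) * s) * (Md * Real.exp (δ * s)))) :
    ∀ τ ≥ (0:ℝ),
      ‖a τ‖ ≤ Real.exp (-(lamStar - k₁ * Γ₀) * τ) *
        (k₁ * ‖a 0‖ +
          ω * (Real.exp (k₁ * T * Md *
            ∫ s in (0:ℝ)..τ, Real.exp (((lamStar - k₁ * Γ₀) + k₁ * Γ₀ - ω + δ) * s)) - 1)) := by
  intro τ hτ
  have hk0 : (0:ℝ) < k₁ := lt_of_lt_of_le one_pos hk₁
  set c : ℝ := k₁ * ‖a 0‖ with hc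
  set v : ℝ := k₁ * Γ₀ with hv
  have hv0 : 0 < v := mul_pos hk0 hΓ₀
  set u : ℝ → ℝ := fun s => ‖a s‖ * Real.exp (lamStar * s) with hu
  set w : ℝ → ℝ := fun s =>
    k₁ * T * ω * Real.exp ((lamStar - ω) * s) * (Md * Real.exp (δ * s)) with hw
  have hu_cont : Continuous u := (ha.norm).mul (by fun_prop)
  have hw_cont : Continuous w := by fun_prop
  have hw_nonneg : ∀ s, 0 ≤ w s := by
    intro s
    have : (0:ℝ) ≤ k₁ := hk0.le
    positivity
  have hvw_cont : Continuous (fun s => v * u s + w s) := by fun_prop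
  set g : ℝ → ℝ := fun t => c + ∫ s in (0:ℝ)..t, (v * u s + w s) with hg
  have hg_deriv : ∀ t, HasDerivAt g (v * u t + w t) t := by
    intro t
    have h := intervalIntegral.integral_hasDerivAt_right
      (hvw_cont.intervalIntegrable 0 t)
      (hvw_cont.stronglyMeasurableAtFilter _ _)
      hvw_cont.continuousAt
    exact h.const_add c
  have hug : ∀ t, 0 ≤ t → u t ≤ g t := by
    intro t ht
    have h := hineq t ht
    have heq : (fun s => k₁ * Γ₀ * Real.exp (lamStar * s) * ‖a s‖ +
        k₁ * T * ω * Real.exp ((lamStar - ω) * s) * (Md * Real.exp (δ * s)))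
        = fun s => v * u s + w s := by
      funext s; simp only [hu, hv, hw]; ring
    rw [heq] at h
    exact h
  -- the key Gronwall function
  set F : ℝ → ℝ := fun t =>
    Real.exp (-v * t) * g t - ∫ s in (0:ℝ)..t, Real.exp (-v * s) * w s with hF
  have hewc : Continuous (fun s => Real.exp (-v * s) * w s) := by fun_prop
  have hF_deriv : ∀ t, HasDerivAt F
      ((Real.exp (-v * t) * (-v)) * g t + Real.exp (-v * t) * (v * u t + w t)
        - Real.exp (-v * t) * w t) t := by
    intro t
    have e1 : HasDerivAt (fun t : ℝ => Real.exp (-v * t)) (Real.exp (-v * t) * (-v)) t := by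
      have : HasDerivAt (fun t : ℝ => -v * t) (-v) t := by
        simpa using (hasDerivAt_id t).const_mul (-v)
      exact this.exp
    have e2 := (e1.mul (hg_deriv t))
    have e3 : HasDerivAt (fun t => ∫ s in (0:ℝ)..t, Real.exp (-v * s) * w s)
        (Real.exp (-v * t) * w t) t :=
      intervalIntegral.integral_hasDerivAt_right
        (hewc.intervalIntegrable 0 t)
        (hewc.stronglyMeasurableAtFilter _ _)
        hewc.continuousAt
    exact e2.sub e3
  have hF_cont : Continuous F :=
    continuous_iff_continuousAt.2 fun t => (hF_deriv t).continuousAt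
  have hF_anti : AntitoneOn F (Ici (0:ℝ)) := by
    apply antitoneOn_of_deriv_nonpos (convex_Ici 0) hF_cont.continuousOn
    · intro t _
      exact (hF_deriv t).differentiableAt.differentiableWithinAt
    · intro t ht
      rw [interior_Ici] at ht
      rw [(hF_deriv t).deriv]
      have h1 : u t ≤ g t := hug t (le_of_lt ht)
      have h2 : (Real.exp (-v * t) * (-v)) * g t + Real.exp (-v * t) * (v * u t + w t)
          - Real.exp (-v * t) * w t = Real.exp (-v * t) * v * (u t - g t) := by ring
      rw [h2]
      have : u t - g t ≤ 0 := sub_nonpos.2 h1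
      have hp : (0:ℝ) ≤ Real.exp (-v * t) * v := by positivity
      exact mul_nonpos_of_nonneg_of_nonpos hp this
  have hF0 : F τ ≤ F 0 := hF_anti (mem_Ici.2 le_rfl) (mem_Ici.2 hτ) hτ
  have hF0val : F 0 = c := by simp [hF, hg]
  -- so exp(-vτ) g τ ≤ c + ∫ exp(-vs) w s ≤ c + ∫ w s
  have hint_le : (∫ s in (0:ℝ)..τ, Real.exp (-v * s) * w s) ≤ ∫ s in (0:ℝ)..τ, w s := by
    apply intervalIntegral.integral_mono_on hτ
      (hewc.intervalIntegrable 0 τ) (hw_cont.intervalIntegrable 0 τ)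
    intro s hs
    have hs0 : 0 ≤ s := hs.1
    have h1 : Real.exp (-v * s) ≤ 1 := by
      apply Real.exp_le_one_iff.2
      nlinarith [hv0]
    nlinarith [hw_nonneg s, hw_nonneg s]
  have hmain : Real.exp (-v * τ) * g τ ≤ c + ∫ s in (0:ℝ)..τ, w s := by
    have := hF0
    rw [hF0val] at this
    simp only [hF] at this
    linarith
  -- compute ∫ w
  set I : ℝ := ∫ s in (0:ℝ)..τ, Real.exp ((lamStar - ω + δ) * s) with hI
  have hwint : (∫ s in (0:ℝ)..τ, w s) = ω * (k₁ * T * Md * I) := by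
    have hwrw : w = fun s => (ω * (k₁ * T * Md)) * Real.exp ((lamStar - ω + δ) * s) := by
      funext s
      simp only [hw]
      rw [show (lamStar - ω + δ) * s = (lamStar - ω) * s + δ * s by ring, Real.exp_add]
      ring
    rw [hwrw, intervalIntegral.integral_const_mul, hI]
    ring
  set X : ℝ := k₁ * T * Md * I with hX
  have hexpX : ω * X ≤ ω * (Real.exp X - 1) := by
    have := Real.add_one_le_exp X
    nlinarith [hω]
  -- chain
  have hchain : u τ ≤ Real.exp (v * τ) * (c + ω * (Real.exp X - 1)) := by
    have h1 : u τ ≤ g τ := hug τ hτ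
    have h2 : Real.exp (-v * τ) * g τ ≤ c + ω * (Real.exp X - 1) := by
      calc Real.exp (-v * τ) * g τ ≤ c + ∫ s in (0:ℝ)..τ, w s := hmain
        _ = c + ω * X := by rw [hwint, hX]
        _ ≤ c + ω * (Real.exp X - 1) := by linarith
    have h3 : g τ ≤ Real.exp (v * τ) * (c + ω * (Real.exp X - 1)) := by
      have hpos : 0 < Real.exp (-v * τ) := Real.exp_pos _
      have := mul_le_mul_of_nonneg_left h2 (Real.exp_pos (v * τ)).le
      calc g τ = Real.exp (v * τ) * (Real.exp (-v * τ) * g τ) := by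
            rw [← mul_assoc, ← Real.exp_add]; simp
        _ ≤ Real.exp (v * τ) * (c + ω * (Real.exp X - 1)) := this
    linarith
  -- finish
  have hgoalI : (∫ s in (0:ℝ)..τ, Real.exp (((lamStar - v) + v - ω + δ) * s)) = I := by
    rw [hI]
    congr 1
    funext s
    congr 1
    ring
  show ‖a τ‖ ≤ Real.exp (-(lamStar - v) * τ) *
      (c + ω * (Real.exp (k₁ * T * Md *
        ∫ s in (0:ℝ)..τ, Real.exp (((lamStar - v) + v - ω + δ) * s)) - 1))
  rw [hgoalI]
  have hexp : 0 < Real.exp (lamStar * τ) := Real.exp_pos _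
  rw [← mul_le_mul_iff_of_pos_right hexp]
  have hrhs : Real.exp (-(lamStar - v) * τ) * (c + ω * (Real.exp (k₁ * T * Md * I) - 1)) *
      Real.exp (lamStar * τ) = Real.exp (v * τ) * (c + ω * (Real.exp X - 1)) := by
    rw [hX, mul_right_comm, ← Real.exp_add]
    ring_nf
  rw [hrhs]
  exact hchain
end
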